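/- Let 𝔼 be a finite-dimensional Banach space and N : [0,1] × 𝔼 → [0,∞) a continuous function such that N_t := N(t,·) is a norm on 𝔼 for each t. Then for every u ∈ L^∞([0,1]; 𝔼), ess sup_{t∈[0,1]} N_t(u(t)) = sup{ ∫₀¹ ⟨w(t)|u(t)⟩ dt : w ∈ L¹([0,1]; 𝔼*), ∫₀¹ N_t*(w(t)) dt ≤ 1 }. -/

import Mathlib

open MeasureTheory Set Filter Topology
open scoped NNReal ENNReal

private lemma stmt3_bounds {E : Type*} [NormedAddCommGroup E] [NormedSpace ℝ E]
    [FiniteDimensional ℝ E] [Nontrivial E] (N : ℝ → E → ℝ)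
    (hNc : ContinuousOn (Function.uncurry N) (Set.Icc 0 1 ×ˢ Set.univ))
    (hN0 : ∀ t ∈ Set.Icc (0:ℝ) 1, ∀ v : E, 0 ≤ N t v)
    (hNeq : ∀ t ∈ Set.Icc (0:ℝ) 1, ∀ v : E, N t v = 0 ↔ v = 0)
    (hNsmul : ∀ t ∈ Set.Icc (0:ℝ) 1, ∀ (c : ℝ) (v : E), N t (c • v) = |c| * N t v) :
    ∃ c C : ℝ, 0 < c ∧ 0 < C ∧ ∀ t ∈ Set.Icc (0:ℝ) 1, ∀ v : E,
      c * ‖v‖ ≤ N t v ∧ N t v ≤ C * ‖v‖ := by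
  obtain ⟨z, hz⟩ : (Metric.sphere (0:E) 1).Nonempty := NormedSpace.sphere_nonempty.2 zero_le_one
  have hK : IsCompact (Set.Icc (0:ℝ) 1 ×ˢ Metric.sphere (0:E) 1) :=
    isCompact_Icc.prod (isCompact_sphere 0 1)
  have hne : (Set.Icc (0:ℝ) 1 ×ˢ Metric.sphere (0:E) 1).Nonempty :=
    ⟨(0, z), by simpa [zero_le_one] using Metric.mem_sphere.1 hz⟩
  have hcont : ContinuousOn (Function.uncurry N) (Set.Icc (0:ℝ) 1 ×ˢ Metric.sphere (0:E) 1) :=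
    hNc.mono (Set.prod_mono subset_rfl (Set.subset_univ _))
  obtain ⟨p, hpK, hpmin⟩ := hK.exists_isMinOn hne hcont
  obtain ⟨q, hqK, hqmax⟩ := hK.exists_isMaxOn hne hcont
  obtain ⟨hp1, hp2⟩ := Set.mem_prod.1 hpK
  obtain ⟨hq1, hq2⟩ := Set.mem_prod.1 hqK
  have hp2ne : p.2 ≠ 0 := by
    intro h
    have := Metric.mem_sphere.1 hp2
    rw [h] at this; simp at this
  have hc0 : 0 < N p.1 p.2 := by
    rcases lt_or_eq_of_le (hN0 p.1 hp1 p.2) with h | h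
    · exact h
    · exact absurd ((hNeq p.1 hp1 p.2).1 h.symm) hp2ne
  refine ⟨N p.1 p.2, N q.1 q.2, hc0, lt_of_lt_of_le hc0 (hpmin hqK : Function.uncurry N p ≤ Function.uncurry N q), fun t ht v => ?_⟩
  rcases eq_or_ne v 0 with rfl | hv
  · have h0 : N t 0 = 0 := (hNeq t ht 0).2 rfl
    simp [h0]
  · have hs : (0:ℝ) < ‖v‖ := norm_pos_iff.2 hv
    set e : E := ‖v‖⁻¹ • v with he
    have heS : e ∈ Metric.sphere (0:E) 1 := by
      simp [he, norm_smul, abs_of_pos (inv_pos.2 hs), inv_mul_cancel₀ hs.ne']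
    have hrec : N t v = ‖v‖ * N t e := by
      have : N t e = |‖v‖⁻¹| * N t v := hNsmul t ht _ v
      rw [this, abs_of_pos (inv_pos.2 hs)]
      field_simp
    have hmin : N p.1 p.2 ≤ N t e := hpmin (Set.mem_prod.2 ⟨ht, heS⟩ : ((t,e) : ℝ × E) ∈ _)
    have hmax : N t e ≤ N q.1 q.2 := hqmax (Set.mem_prod.2 ⟨ht, heS⟩ : ((t,e) : ℝ × E) ∈ _)
    constructor
    · rw [hrec, mul_comm (N p.1 p.2)]
      exact mul_le_mul_of_nonneg_left hmin hs.le
    · rw [hrec, mul_comm (N q.1 q.2)]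
      exact mul_le_mul_of_nonneg_left hmax hs.le

private lemma stmt3_hb {E : Type*} [NormedAddCommGroup E] [NormedSpace ℝ E]
    [FiniteDimensional ℝ E] (Q : E → ℝ) (hQ0 : ∀ v, 0 ≤ Q v)
    (hQsmul : ∀ (c : ℝ) (v : E), Q (c • v) = |c| * Q v)
    (hQadd : ∀ v w, Q (v + w) ≤ Q v + Q w) (v₀ : E) :
    ∃ x : E →L[ℝ] ℝ, x v₀ = Q v₀ ∧ ∀ v, x v ≤ Q v := by
  have hQzero : Q 0 = 0 := by
    have := hQsmul 0 0; simpa using this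
  rcases eq_or_ne v₀ 0 with rfl | hv₀
  · exact ⟨0, by simp [hQzero], fun v => hQ0 v⟩
  obtain ⟨g, hg1, hg2⟩ := exists_extension_of_le_sublinear
    (LinearPMap.mkSpanSingleton v₀ (Q v₀) hv₀) Q
    (fun c hc x => by rw [hQsmul, abs_of_pos hc])
    hQadd
    (by
      rintro ⟨x, hx⟩
      obtain ⟨a, rfl⟩ := Submodule.mem_span_singleton.1 hx
      have happ : (LinearPMap.mkSpanSingleton v₀ (Q v₀) hv₀ : E →ₗ.[ℝ] ℝ)
          ⟨a • v₀, hx⟩ = a • Q v₀ := LinearPMap.mkSpanSingleton'_apply _ _ _ a _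
      rw [happ, hQsmul]
      have : a * Q v₀ ≤ |a| * Q v₀ := mul_le_mul_of_nonneg_right (le_abs_self a) (hQ0 v₀)
      simpa [smul_eq_mul] using this)
  refine ⟨LinearMap.toContinuousLinearMap g, ?_, fun v => hg2 v⟩
  have := hg1 ⟨v₀, Submodule.mem_span_singleton_self v₀⟩
  rw [LinearPMap.mkSpanSingleton_apply] at this
  simpa using this

set_option maxHeartbeats 1000000 in
/-- For a continuous family of norms `N_t` on a finite-dimensional Banach
space `𝔼` and `u ∈ L^∞([0,1]; 𝔼)`,
`ess sup_t N_t(u(t)) = sup { ∫₀¹ ⟨w(t)|u(t)⟩ dt : w ∈ L¹([0,1]; 𝔼*), ∫₀¹ N_t*(w(t)) dt ≤ 1 }`,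
where `N_t*(x) = sup { x(v) : N_t(v) ≤ 1 }` is the dual norm. -/
theorem stmt_3 {E : Type*} [NormedAddCommGroup E] [NormedSpace ℝ E] [FiniteDimensional ℝ E]
    (N : ℝ → E → ℝ)
    (hNc : ContinuousOn (Function.uncurry N) (Set.Icc 0 1 ×ˢ Set.univ))
    (hN0 : ∀ t ∈ Set.Icc (0:ℝ) 1, ∀ v : E, 0 ≤ N t v)
    (hNeq : ∀ t ∈ Set.Icc (0:ℝ) 1, ∀ v : E, N t v = 0 ↔ v = 0)
    (hNsmul : ∀ t ∈ Set.Icc (0:ℝ) 1, ∀ (c : ℝ) (v : E), N t (c • v) = |c| * N t v)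
    (hNadd : ∀ t ∈ Set.Icc (0:ℝ) 1, ∀ v w : E, N t (v + w) ≤ N t v + N t w)
    (u : ℝ → E)
    (hu : MemLp u ⊤ (volume.restrict (Set.Icc (0:ℝ) 1))) :
    essSup (fun t => N t (u t)) (volume.restrict (Set.Icc (0:ℝ) 1)) =
      sSup { r : ℝ | ∃ w : ℝ → E →L[ℝ] ℝ, IntegrableOn w (Set.Icc 0 1) volume ∧
        (∫ t in Set.Icc (0:ℝ) 1, sSup { a : ℝ | ∃ v : E, N t v ≤ 1 ∧ a = w t v }) ≤ 1 ∧
        r = ∫ t in Set.Icc (0:ℝ) 1, w t (u t) } := by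
  classical
  have hIcc : MeasurableSet (Set.Icc (0:ℝ) 1) := measurableSet_Icc
  set μ := volume.restrict (Set.Icc (0:ℝ) 1) with hμdef
  haveI hprob : IsProbabilityMeasure μ := ⟨by
    rw [hμdef, Measure.restrict_apply_univ, Real.volume_Icc]; norm_num⟩
  have hμne : μ ≠ 0 := hprob.ne_zero
  haveI : (ae μ).NeBot := ae_neBot.2 hμne
  have hae : ∀ᵐ t ∂μ, t ∈ Set.Icc (0:ℝ) 1 := ae_restrict_mem hIcc
  set Sset := { r : ℝ | ∃ w : ℝ → E →L[ℝ] ℝ, IntegrableOn w (Set.Icc 0 1) volume ∧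
        (∫ t in Set.Icc (0:ℝ) 1, sSup { a : ℝ | ∃ v : E, N t v ≤ 1 ∧ a = w t v }) ≤ 1 ∧
        r = ∫ t in Set.Icc (0:ℝ) 1, w t (u t) } with hSsetdef
  have h0mem : (0:ℝ) ∈ Sset := by
    refine ⟨fun _ => (0 : E →L[ℝ] ℝ), by exact integrableOn_zero (ε' := E →L[ℝ] ℝ), ?_, ?_⟩
    · have hz : ∀ᵐ t ∂μ,
          sSup { a : ℝ | ∃ v : E, N t v ≤ 1 ∧ a = (0 : E →L[ℝ] ℝ) v } = 0 := by
        filter_upwards [hae] with t ht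
        have : { a : ℝ | ∃ v : E, N t v ≤ 1 ∧ a = (0 : E →L[ℝ] ℝ) v } = {0} := by
          ext a
          constructor
          · rintro ⟨x, -, rfl⟩; simp
          · rintro rfl
            exact ⟨0, by rw [(hNeq t ht 0).2 rfl]; exact zero_le_one, by simp⟩
        rw [this, csSup_singleton]
      rw [integral_congr_ae hz, integral_zero]
      norm_num
    · simp
  rcases subsingleton_or_nontrivial E with hE | hE
  · have hu0 : ∀ t, u t = 0 := fun t => Subsingleton.elim _ _
    have h1 : essSup (fun t => N t (u t)) μ = 0 := by
      have hcg : (fun t => N t (u t)) =ᵐ[μ] fun _ => (0:ℝ) := by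
        filter_upwards [hae] with t ht
        rw [hu0 t]; exact (hNeq t ht 0).2 rfl
      rw [essSup_congr_ae hcg, essSup_const _ hμne]
    have h2 : Sset = {0} := by
      refine Set.eq_singleton_iff_unique_mem.2 ⟨h0mem, ?_⟩
      rintro r ⟨w, -, -, rfl⟩
      have hz : ∀ t, w t (u t) = 0 := fun t => by rw [hu0 t, map_zero]
      simp [hz]
    rw [h1, h2, csSup_singleton]
  · letI : MeasurableSpace E := borel E
    haveI : BorelSpace E := ⟨rfl⟩
    obtain ⟨c, C, hc, hC, hcC⟩ := stmt3_bounds N hNc hN0 hNeq hNsmul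
    set τ : ℝ → ℝ := fun t => max 0 (min 1 t) with hτdef
    have hτmem : ∀ t, τ t ∈ Set.Icc (0:ℝ) 1 :=
      fun t => ⟨le_max_left _ _, max_le zero_le_one (min_le_left _ _)⟩
    have hτeq : ∀ t ∈ Set.Icc (0:ℝ) 1, τ t = t := fun t ht => by
      rw [hτdef]; simp only
      rw [min_eq_right ht.2, max_eq_right ht.1]
    set Np : ℝ → E → ℝ := fun t v => N (τ t) v with hNpdef
    have hNpc : Continuous (Function.uncurry Np) := by
      have heq : Function.uncurry Np =
          (Function.uncurry N) ∘ (fun p : ℝ × E => (τ p.1, p.2)) := rfl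
      rw [heq]
      refine hNc.comp_continuous ?_ fun p => ⟨hτmem p.1, Set.mem_univ _⟩
      exact (continuous_const.max (continuous_const.min continuous_fst)).prodMk continuous_snd
    have hNpeq : ∀ t ∈ Set.Icc (0:ℝ) 1, ∀ v : E, Np t v = N t v := fun t ht v => by
      rw [hNpdef]; simp only; rw [hτeq t ht]
    have hmu : AEStronglyMeasurable u μ := hu.1
    set g : ℝ → E := hmu.mk u with hgdef
    have hg : StronglyMeasurable g := hmu.stronglyMeasurable_mk
    have hug : u =ᵐ[μ] g := hmu.ae_eq_mk
    set K : ℝ := (eLpNorm u ⊤ μ).toReal with hKdef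
    have hK0 : (0:ℝ) ≤ K := ENNReal.toReal_nonneg
    have hKbd : ∀ᵐ t ∂μ, ‖u t‖ ≤ K := by
      have h1 : ∀ᵐ t ∂μ, (‖u t‖₊ : ℝ≥0∞) ≤ eLpNormEssSup u μ := ae_le_eLpNormEssSup
      have hlt : eLpNormEssSup u μ < ⊤ := by
        have h2 := hu.2; rwa [eLpNorm_exponent_top] at h2
      filter_upwards [h1] with t ht
      have h3 : ((‖u t‖₊ : ℝ≥0∞)).toReal ≤ (eLpNormEssSup u μ).toReal :=
        ENNReal.toReal_mono hlt.ne ht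
      simpa [hKdef, eLpNorm_exponent_top] using h3
    set f : ℝ → ℝ := fun t => N t (u t) with hfdef
    set M : ℝ := essSup f μ with hMdef
    have haef : ∀ᵐ t ∂μ, 0 ≤ f t ∧ f t ≤ C * K := by
      filter_upwards [hae, hKbd] with t ht hKt
      refine ⟨hN0 t ht _, le_trans (hcC t ht (u t)).2 ?_⟩
      nlinarith [norm_nonneg (u t)]
    have hbddf : IsBoundedUnder (· ≤ ·) (ae μ) f :=
      ⟨C * K, haef.mono fun t ht => ht.2⟩
    have hfM : ∀ᵐ t ∂μ, f t ≤ M := ae_le_essSup hbddf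
    have hM0 : (0:ℝ) ≤ M :=
      le_limsup_of_frequently_le ((haef.mono fun t ht => ht.1).frequently) hbddf
    haveI : Nonempty E := ⟨0⟩
    set vs : ℕ → E := TopologicalSpace.denseSeq E with hvs
    have hvd : DenseRange vs := TopologicalSpace.denseRange_denseSeq E
    -- upper bound
    have hub : ∀ r ∈ Sset, r ≤ M := by
      rintro r ⟨w, hwint, hwdual, rfl⟩
      have hwμ : Integrable w μ := hwint
      set S : ℝ → ℝ := fun t => sSup {a : ℝ | ∃ v : E, N t v ≤ 1 ∧ a = w t v} with hSdef
      have hmemD : ∀ t ∈ Set.Icc (0:ℝ) 1,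
          (0:ℝ) ∈ {a : ℝ | ∃ v : E, N t v ≤ 1 ∧ a = w t v} := fun t ht =>
        ⟨0, by rw [(hNeq t ht 0).2 rfl]; exact zero_le_one, (map_zero (w t)).symm⟩
      have hbddD : ∀ t ∈ Set.Icc (0:ℝ) 1,
          ∀ a ∈ {a : ℝ | ∃ v : E, N t v ≤ 1 ∧ a = w t v}, a ≤ ‖w t‖ * c⁻¹ := by
        rintro t ht a ⟨x, hx1, rfl⟩
        have hxn : ‖x‖ ≤ c⁻¹ := by
          have h1 : c * ‖x‖ ≤ 1 := (hcC t ht x).1.trans hx1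
          calc ‖x‖ = c⁻¹ * (c * ‖x‖) := by field_simp
            _ ≤ c⁻¹ * 1 := mul_le_mul_of_nonneg_left h1 (by positivity)
            _ = c⁻¹ := mul_one _
        calc w t x ≤ ‖w t x‖ := le_abs_self _
          _ ≤ ‖w t‖ * ‖x‖ := (w t).le_opNorm x
          _ ≤ ‖w t‖ * c⁻¹ := mul_le_mul_of_nonneg_left hxn (norm_nonneg _)
      have hS0 : ∀ t ∈ Set.Icc (0:ℝ) 1, 0 ≤ S t := fun t ht =>
        le_csSup ⟨‖w t‖ * c⁻¹, hbddD t ht⟩ (hmemD t ht)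
      have hSub : ∀ t ∈ Set.Icc (0:ℝ) 1, S t ≤ ‖w t‖ * c⁻¹ := fun t ht =>
        csSup_le ⟨0, hmemD t ht⟩ (hbddD t ht)
      have hkey : ∀ t ∈ Set.Icc (0:ℝ) 1, ∀ x : E, w t x ≤ S t * N t x := by
        intro t ht x
        rcases eq_or_lt_of_le (hN0 t ht x) with h | h
        · have hx0 : x = 0 := (hNeq t ht x).1 h.symm
          rw [hx0, map_zero, (hNeq t ht 0).2 rfl, mul_zero]
        · have h1 : N t ((N t x)⁻¹ • x) ≤ 1 := by
            rw [hNsmul t ht ((N t x)⁻¹) x, abs_of_pos (inv_pos.2 h), inv_mul_cancel₀ h.ne']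
          have h2 : w t ((N t x)⁻¹ • x) ≤ S t :=
            le_csSup ⟨_, hbddD t ht⟩ ⟨_, h1, rfl⟩
          have h3 : w t x = N t x * w t ((N t x)⁻¹ • x) := by
            rw [_root_.map_smul, smul_eq_mul]
            field_simp
          rw [h3, mul_comm (S t) (N t x)]
          exact mul_le_mul_of_nonneg_left h2 h.le
      have hSmeas : AEMeasurable S μ := by
        set w' : ℝ → E →L[ℝ] ℝ := hwμ.1.mk w with hw'def
        have hw' : StronglyMeasurable w' := hwμ.1.stronglyMeasurable_mk
        have hww' : w =ᵐ[μ] w' := hwμ.1.ae_eq_mk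
        set T : ℕ → ℝ → ℝ := fun n t => w' t ((max (Np t (vs n)) 1)⁻¹ • vs n) with hTdef
        have hTm : ∀ n, Measurable (T n) := by
          intro n
          have hcNp : Continuous fun t : ℝ => Np t (vs n) :=
            hNpc.comp (continuous_id.prodMk continuous_const)
          have hψ : Continuous fun t : ℝ => (max (Np t (vs n)) 1)⁻¹ • vs n := by
            refine Continuous.smul ?_ continuous_const
            refine (hcNp.max continuous_const).inv₀ fun t => ?_
            positivity
          have hcomp := Continuous.comp_stronglyMeasurable
            (g := fun p : (E →L[ℝ] ℝ) × E => p.1 p.2)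
            (isBoundedBilinearMap_apply.continuous)
            (hw'.prodMk hψ.stronglyMeasurable)
          exact hcomp.measurable
        set F : ℕ → ℝ → ℝ := fun k t =>
          (Finset.range (k+1)).sup' Finset.nonempty_range_add_one (fun n => T n t) with hFdef
        have hFm : ∀ k, Measurable (F k) := fun k =>
          Finset.measurable_range_sup'' fun n _ => hTm n
        set L : ℝ → ℝ := fun t => ⨆ k, F k t with hLdef
        have hall : ∀ᵐ t ∂μ, S t = L t ∧
            Tendsto (fun k => F k t) atTop (nhds (L t)) := by
          filter_upwards [hae, hww'] with t ht hwt
          have hTle : ∀ n, T n t ≤ S t := by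
            intro n
            refine le_csSup ⟨_, hbddD t ht⟩ ⟨(max (Np t (vs n)) 1)⁻¹ • vs n, ?_, by rw [hwt]⟩
            have hm1 : (1:ℝ) ≤ max (Np t (vs n)) 1 := le_max_right _ _
            have hmpos : (0:ℝ) < max (Np t (vs n)) 1 := lt_of_lt_of_le one_pos hm1
            rw [hNsmul t ht ((max (Np t (vs n)) 1)⁻¹) (vs n), abs_of_pos (inv_pos.2 hmpos), ← hNpeq t ht]
            calc (max (Np t (vs n)) 1)⁻¹ * Np t (vs n)
                ≤ (max (Np t (vs n)) 1)⁻¹ * max (Np t (vs n)) 1 :=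
                  mul_le_mul_of_nonneg_left (le_max_left _ _) (inv_pos.2 hmpos).le
              _ = 1 := inv_mul_cancel₀ hmpos.ne'
          have hFle : ∀ k, F k t ≤ S t := fun k =>
            Finset.sup'_le _ _ fun n _ => hTle n
          have hTF : ∀ n, T n t ≤ F n t := fun n =>
            Finset.le_sup' (fun m => T m t) (Finset.self_mem_range_succ n)
          have hFbdd : BddAbove (Set.range fun k => F k t) := by
            refine ⟨S t, ?_⟩
            rintro x ⟨k, rfl⟩
            exact hFle k
          have hFmono : Monotone fun k => F k t := by
            intro k l hkl
            exact Finset.sup'_mono (fun n => T n t)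
              (Finset.range_subset_range.2 (by omega)) Finset.nonempty_range_add_one
          have hLS : L t ≤ S t := ciSup_le hFle
          have hTL : ∀ n, T n t ≤ L t := fun n => (hTF n).trans (le_ciSup hFbdd n)
          have htend : Tendsto (fun k => F k t) atTop (nhds (L t)) :=
            tendsto_atTop_ciSup hFmono hFbdd
          refine ⟨le_antisymm ?_ hLS, htend⟩
          refine csSup_le ⟨0, hmemD t ht⟩ ?_
          rintro a ⟨x, hx1, rfl⟩
          set φ : E → ℝ := fun y => w t ((max (Np t y) 1)⁻¹ • y) with hφdef
          have hφc : Continuous φ := by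
            have hcNp : Continuous fun y : E => Np t y :=
              hNpc.comp (continuous_const.prodMk continuous_id)
            refine (w t).continuous.comp (Continuous.smul ?_ continuous_id)
            refine (hcNp.max continuous_const).inv₀ fun y => ?_
            positivity
          have hclosed : IsClosed {y : E | φ y ≤ L t} :=
            isClosed_le hφc continuous_const
          have hsub : Set.range vs ⊆ {y : E | φ y ≤ L t} := by
            rintro y ⟨n, rfl⟩
            have hφvs : φ (vs n) = T n t := by
              rw [hφdef]; simp only [hTdef, hwt]
            exact Set.mem_setOf_eq ▸ (hφvs ▸ hTL n)
          have huniv : ∀ y : E, φ y ≤ L t := fun y =>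
            hclosed.closure_subset_iff.2 hsub (hvd y)
          have hφx : φ x = w t x := by
            rw [hφdef]
            simp only
            rw [← hNpeq t ht] at hx1
            rw [max_eq_right hx1, inv_one, one_smul]
          rw [← hφx]
          exact huniv x
        have hLmeas : AEMeasurable L μ :=
          aemeasurable_of_tendsto_metrizable_ae atTop
            (fun k => (hFm k).aemeasurable) (hall.mono fun t ht => ht.2)
        exact hLmeas.congr (EventuallyEq.symm (hall.mono fun t ht => ht.1))
      have hSint : Integrable S μ := by
        refine Integrable.mono' (hwμ.norm.mul_const c⁻¹) hSmeas.aestronglyMeasurable ?_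
        filter_upwards [hae] with t ht
        rw [Real.norm_eq_abs, abs_of_nonneg (hS0 t ht)]
        exact hSub t ht
      have hwu_meas : AEStronglyMeasurable (fun t => w t (u t)) μ :=
        isBoundedBilinearMap_apply.continuous.comp_aestronglyMeasurable (hwμ.1.prodMk hmu)
      have hwu_int : Integrable (fun t => w t (u t)) μ := by
        refine Integrable.mono' (hwμ.norm.mul_const K) hwu_meas ?_
        filter_upwards [hKbd] with t ht
        calc ‖w t (u t)‖ ≤ ‖w t‖ * ‖u t‖ := (w t).le_opNorm _
          _ ≤ ‖w t‖ * K := mul_le_mul_of_nonneg_left ht (norm_nonneg _)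
      have hle : (fun t => w t (u t)) ≤ᵐ[μ] fun t => S t * M := by
        filter_upwards [hae, hfM] with t ht hMt
        have hMt' : N t (u t) ≤ M := hMt
        calc w t (u t) ≤ S t * N t (u t) := hkey t ht (u t)
          _ ≤ S t * M := mul_le_mul_of_nonneg_left hMt' (hS0 t ht)
      calc (∫ t, w t (u t) ∂μ) ≤ ∫ t, S t * M ∂μ :=
            integral_mono_ae hwu_int (hSint.mul_const M) hle
        _ = (∫ t, S t ∂μ) * M := integral_mul_const M S
        _ ≤ 1 * M := mul_le_mul_of_nonneg_right hwdual hM0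
        _ = M := one_mul M
    have hbdd : BddAbove Sset := ⟨M, hub⟩
    -- lower bound step
    have hstep : ∀ ε : ℝ, 0 < ε → ∃ r ∈ Sset, M - ε ≤ r := by
      intro ε hε
      set ε' : ℝ := ε / (2 * (M + 2)) with hε'def
      have hM2 : (0:ℝ) < 2 * (M + 2) := by linarith
      have hε' : 0 < ε' := div_pos hε hM2
      have hε'eq : ε' * (2 * (M + 2)) = ε := by
        rw [hε'def]; field_simp
      set R : ℝ := K + c⁻¹ + 1 with hRdef
      have hKc : IsCompact (Set.Icc (0:ℝ) 1 ×ˢ Metric.closedBall (0:E) R) :=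
        isCompact_Icc.prod (isCompact_closedBall 0 R)
      have hucont : UniformContinuousOn (Function.uncurry N)
          (Set.Icc (0:ℝ) 1 ×ˢ Metric.closedBall (0:E) R) :=
        hKc.uniformContinuousOn_of_continuous
          (hNc.mono (Set.prod_mono subset_rfl (Set.subset_univ _)))
      obtain ⟨δ, hδ, hδ2⟩ := Metric.uniformContinuousOn_iff.1 hucont ε' hε'
      set ρ : ℝ := min (min δ 1 / 3) (ε' / (C + 1)) with hρdef
      have hρ : 0 < ρ := by
        refine lt_min (by positivity) (by positivity)
      have hρδ : ρ < δ := by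
        have h1 : ρ ≤ min δ 1 / 3 := min_le_left _ _
        have h2 : min δ 1 ≤ δ := min_le_left _ _
        linarith
      have hρC : ρ ≤ ε' / (C + 1) := min_le_right _ _
      set A : Set ℝ := Set.Icc (0:ℝ) 1 ∩ {t | M - ε' < Np t (g t)} ∩ {t | ‖g t‖ ≤ K} with hAdef
      have hNpg_meas : Measurable fun t => Np t (g t) :=
        hNpc.measurable.comp (measurable_id.prodMk hg.measurable)
      have hAmeas : MeasurableSet A :=
        (hIcc.inter (measurableSet_lt measurable_const hNpg_meas)).inter
          (measurableSet_le hg.measurable.norm measurable_const)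
      have hApos : μ A ≠ 0 := by
        intro h0
        have hcompl : ∀ᵐ t ∂μ, t ∉ A := by
          rw [ae_iff]
          simpa using h0
        have hle2 : ∀ᵐ t ∂μ, f t ≤ M - ε' := by
          filter_upwards [hae, hug, hKbd, hcompl] with t ht htug htK htA
          by_contra hcon2
          push_neg at hcon2
          apply htA
          refine ⟨⟨ht, ?_⟩, ?_⟩
          · show M - ε' < Np t (g t)
            rw [hNpeq t ht, ← htug]
            exact hcon2
          · show ‖g t‖ ≤ K
            rw [← htug]
            exact htK
        have hcob : IsCoboundedUnder (· ≤ ·) (ae μ) f :=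
          IsBoundedUnder.isCoboundedUnder_le ⟨0, haef.mono fun t ht => ht.1⟩
        have : M ≤ M - ε' := limsup_le_of_le hcob hle2
        linarith
      set B : ℕ × ℕ → Set ℝ := fun p =>
        A ∩ g ⁻¹' (Metric.closedBall (vs p.1) ρ) ∩
          Set.Icc ((p.2 : ℝ) * ρ) (((p.2 : ℝ) + 1) * ρ) with hBdef
      have hcover : A ⊆ ⋃ p, B p := by
        intro t htA
        have ht : t ∈ Set.Icc (0:ℝ) 1 := htA.1.1
        obtain ⟨n, hn⟩ := Metric.denseRange_iff.1 hvd (g t) ρ hρ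
        refine Set.mem_iUnion.2 ⟨(n, ⌊t / ρ⌋₊), ⟨⟨htA, ?_⟩, ?_, ?_⟩⟩
        · show g t ∈ Metric.closedBall (vs n) ρ
          exact Metric.mem_closedBall.2 hn.le
        · have h1 : (⌊t / ρ⌋₊ : ℝ) ≤ t / ρ := Nat.floor_le (div_nonneg ht.1 hρ.le)
          calc ((⌊t / ρ⌋₊ : ℝ)) * ρ ≤ (t / ρ) * ρ := mul_le_mul_of_nonneg_right h1 hρ.le
            _ = t := by field_simp
        · have h1 : t / ρ < (⌊t / ρ⌋₊ : ℝ) + 1 := Nat.lt_floor_add_one _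
          have := (div_lt_iff₀ hρ).1 h1
          linarith
      obtain ⟨p₀, hp₀⟩ : ∃ p, μ (B p) ≠ 0 := by
        by_contra hall0
        push_neg at hall0
        exact hApos (measure_mono_null hcover (measure_iUnion_null hall0))
      set B₀ := B p₀ with hB₀def
      have hB₀meas : MeasurableSet B₀ :=
        (hAmeas.inter (hg.measurable measurableSet_closedBall)).inter measurableSet_Icc
      have hB₀A : B₀ ⊆ A := fun t ht => ht.1.1
      have hB₀Icc : B₀ ⊆ Set.Icc (0:ℝ) 1 := fun t ht => ht.1.1.1.1
      obtain ⟨t₀, ht₀⟩ : B₀.Nonempty := nonempty_of_measure_ne_zero hp₀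
      set v₀ : E := g t₀ with hv₀def
      have ht₀Icc : t₀ ∈ Set.Icc (0:ℝ) 1 := hB₀Icc ht₀
      have hv₀K : ‖v₀‖ ≤ K := (hB₀A ht₀).2
      have hv₀M : M - ε' < N t₀ v₀ := by
        have h1 : M - ε' < Np t₀ (g t₀) := (hB₀A ht₀).1.2
        rwa [hNpeq t₀ ht₀Icc] at h1
      have hgeo : ∀ t ∈ B₀, dist t t₀ < δ ∧ ‖g t - v₀‖ ≤ 2 * ρ := by
        intro t ht
        have hI1 : t ∈ Set.Icc ((p₀.2 : ℝ) * ρ) (((p₀.2 : ℝ) + 1) * ρ) := ht.2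
        have hI2 : t₀ ∈ Set.Icc ((p₀.2 : ℝ) * ρ) (((p₀.2 : ℝ) + 1) * ρ) := ht₀.2
        have hexp : ((p₀.2 : ℝ) + 1) * ρ = (p₀.2 : ℝ) * ρ + ρ := by ring
        constructor
        · rw [Real.dist_eq, abs_sub_lt_iff]
          constructor
          · have := hI1.2; have := hI2.1; rw [hexp] at *; linarith
          · have := hI2.2; have := hI1.1; rw [hexp] at *; linarith
        · have hb1 : dist (g t) (vs p₀.1) ≤ ρ := Metric.mem_closedBall.1 ht.1.2
          have hb2 : dist (g t₀) (vs p₀.1) ≤ ρ := Metric.mem_closedBall.1 ht₀.1.2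
          have := dist_triangle (g t) (vs p₀.1) (g t₀)
          have hd : dist (g t) v₀ ≤ 2 * ρ := by
            rw [hv₀def]
            calc dist (g t) (g t₀) ≤ dist (g t) (vs p₀.1) + dist (vs p₀.1) (g t₀) :=
                  dist_triangle _ _ _
              _ ≤ ρ + ρ := add_le_add hb1 (dist_comm (g t₀) (vs p₀.1) ▸ hb2)
              _ = 2 * ρ := by ring
          rw [← dist_eq_norm]
          exact hd
      obtain ⟨x₀, hx₀v₀, hx₀le⟩ :=
        stmt3_hb (N t₀) (hN0 t₀ ht₀Icc) (hNsmul t₀ ht₀Icc) (hNadd t₀ ht₀Icc) v₀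
      have hx₀norm : ‖x₀‖ ≤ C := by
        refine ContinuousLinearMap.opNorm_le_bound _ hC.le fun x => ?_
        rw [Real.norm_eq_abs, abs_le]
        have h2 : N t₀ (-x) = N t₀ x := by
          have h3 := hNsmul t₀ ht₀Icc (-1) x
          simpa using h3
        have h1 : -(x₀ x) ≤ N t₀ x := by
          have := hx₀le (-x)
          rw [map_neg, h2] at this
          exact this
        have h3 := (hcC t₀ ht₀Icc x).2
        exact ⟨by linarith, (hx₀le x).trans h3⟩
      have hdualb : ∀ t ∈ B₀, ∀ x : E, N t x ≤ 1 → x₀ x ≤ 1 + ε' := by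
        intro t ht x hx
        have htIcc := hB₀Icc ht
        have hxc : ‖x‖ ≤ c⁻¹ := by
          have h1 : c * ‖x‖ ≤ 1 := (hcC t htIcc x).1.trans hx
          calc ‖x‖ = c⁻¹ * (c * ‖x‖) := by field_simp
            _ ≤ c⁻¹ * 1 := mul_le_mul_of_nonneg_left h1 (by positivity)
            _ = c⁻¹ := mul_one _
        have hxR : ‖x‖ ≤ R := by
          rw [hRdef]; linarith
        have hmem1 : ((t₀, x) : ℝ × E) ∈ Set.Icc (0:ℝ) 1 ×ˢ Metric.closedBall (0:E) R :=
          ⟨ht₀Icc, by simpa [Metric.mem_closedBall, dist_zero_right] using hxR⟩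
        have hmem2 : ((t, x) : ℝ × E) ∈ Set.Icc (0:ℝ) 1 ×ˢ Metric.closedBall (0:E) R :=
          ⟨htIcc, by simpa [Metric.mem_closedBall, dist_zero_right] using hxR⟩
        have hdist : dist ((t₀, x) : ℝ × E) ((t, x) : ℝ × E) < δ := by
          rw [Prod.dist_eq]
          simp only [dist_self]
          rw [max_eq_left dist_nonneg]
          rw [dist_comm]
          exact (hgeo t ht).1
        have hd := hδ2 _ hmem1 _ hmem2 hdist
        rw [Real.dist_eq] at hd
        have habs := abs_lt.1 hd
        have hx₀x := hx₀le x
        have : (Function.uncurry N (t₀, x) : ℝ) = N t₀ x := rfl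
        have h5 : N t₀ x - N t x < ε' := by
          simpa [Function.uncurry] using habs.2
        linarith
      have hμB₀top : μ B₀ ≠ ⊤ := measure_ne_top μ B₀
      set m₀ : ℝ := (μ B₀).toReal with hm₀def
      have hm₀pos : 0 < m₀ := ENNReal.toReal_pos hp₀ hμB₀top
      set κ : ℝ := (m₀ * (1 + ε'))⁻¹ with hκdef
      have hκpos : 0 < κ := by
        rw [hκdef]
        exact inv_pos.2 (mul_pos hm₀pos (by linarith))
      set w : ℝ → E →L[ℝ] ℝ := fun t => B₀.indicator (fun _ => κ • x₀) t with hwdef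
      have hwint : Integrable w μ := by
        rw [hwdef]
        refine (integrable_indicator_iff (f := fun _ => κ • x₀) hB₀meas).2 ?_
        exact integrableOn_const hμB₀top
      refine ⟨∫ t, w t (u t) ∂μ, ⟨w, hwint, ?_, rfl⟩, ?_⟩
      · -- dual integral ≤ 1
        set D : ℝ → ℝ := fun t => sSup {a : ℝ | ∃ v : E, N t v ≤ 1 ∧ a = w t v} with hDdef
        have hDbd : ∀ t ∈ Set.Icc (0:ℝ) 1,
            0 ≤ D t ∧ D t ≤ B₀.indicator (fun _ => m₀⁻¹) t := by
          intro t ht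
          have hmem0 : (0:ℝ) ∈ {a : ℝ | ∃ v : E, N t v ≤ 1 ∧ a = w t v} :=
            ⟨0, by rw [(hNeq t ht 0).2 rfl]; exact zero_le_one, (map_zero (w t)).symm⟩
          have hub2 : ∀ a ∈ {a : ℝ | ∃ v : E, N t v ≤ 1 ∧ a = w t v},
              a ≤ B₀.indicator (fun _ => m₀⁻¹) t := by
            rintro a ⟨x, hx1, rfl⟩
            by_cases htB : t ∈ B₀
            · rw [Set.indicator_of_mem htB, hwdef]
              simp only [Set.indicator_of_mem htB]
              have h1 : x₀ x ≤ 1 + ε' := hdualb t htB x hx1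
              have h2 : (κ • x₀) x = κ * x₀ x := rfl
              rw [h2]
              calc κ * x₀ x ≤ κ * (1 + ε') := mul_le_mul_of_nonneg_left h1 hκpos.le
                _ = m₀⁻¹ := by
                  rw [hκdef, mul_inv]
                  field_simp
            · rw [Set.indicator_of_notMem htB, hwdef]
              simp only [Set.indicator_of_notMem htB]
              simp
          exact ⟨le_csSup ⟨_, hub2⟩ hmem0, csSup_le ⟨0, hmem0⟩ hub2⟩
        by_cases hDint : Integrable D μ
        · have hind : Integrable (B₀.indicator fun _ => m₀⁻¹) μ := by
            rw [integrable_indicator_iff hB₀meas]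
            exact integrableOn_const hμB₀top
          have h1 : ∫ t, D t ∂μ ≤ ∫ t, B₀.indicator (fun _ => m₀⁻¹) t ∂μ :=
            integral_mono_ae hDint hind (hae.mono fun t ht => (hDbd t ht).2)
          have h2 : ∫ t, B₀.indicator (fun _ => m₀⁻¹) t ∂μ = m₀⁻¹ * m₀ := by
            rw [integral_indicator_const _ hB₀meas, smul_eq_mul, measureReal_def, ← hm₀def, mul_comm]
          calc (∫ t, D t ∂μ) ≤ m₀⁻¹ * m₀ := h2 ▸ h1
            _ = 1 := inv_mul_cancel₀ hm₀pos.ne'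
        · rw [integral_undef hDint]
          exact zero_le_one
      · -- value bound
        have hwu : (fun t => w t (u t)) =ᵐ[μ]
            fun t => B₀.indicator (fun s => κ * x₀ (g s)) t := by
          filter_upwards [hug] with t htug
          by_cases htB : t ∈ B₀
          · rw [hwdef]
            simp only [Set.indicator_of_mem htB]
            rw [htug]
            rfl
          · rw [hwdef]
            simp only [Set.indicator_of_notMem htB]
            simp
        rw [integral_congr_ae hwu, integral_indicator hB₀meas]
        have hptwise : ∀ t ∈ B₀, M - 3 * ε' ≤ x₀ (g t) := by
          intro t ht
          have h1 : ‖g t - v₀‖ ≤ 2 * ρ := (hgeo t ht).2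
          have h2 : x₀ (g t) = x₀ v₀ + x₀ (g t - v₀) := by
            rw [← map_add]
            congr 1
            abel
          have h3 : |x₀ (g t - v₀)| ≤ C * (2 * ρ) := by
            calc |x₀ (g t - v₀)| = ‖x₀ (g t - v₀)‖ := rfl
              _ ≤ ‖x₀‖ * ‖g t - v₀‖ := x₀.le_opNorm _
              _ ≤ C * (2 * ρ) :=
                mul_le_mul hx₀norm h1 (norm_nonneg _) hC.le
          have h4 : C * (2 * ρ) ≤ 2 * ε' := by
            have h5 : C * ρ ≤ C * (ε' / (C + 1)) := mul_le_mul_of_nonneg_left hρC hC.le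
            have h6 : C * (ε' / (C + 1)) ≤ ε' := by
              rw [div_eq_inv_mul, ← mul_assoc]
              have h7 : C * (C + 1)⁻¹ ≤ 1 := by
                rw [mul_inv_le_iff₀ (by linarith)]
                linarith
              nlinarith
            linarith
          rw [h2, hx₀v₀]
          have := abs_le.1 h3
          linarith
        have hint2 : IntegrableOn (fun t => x₀ (g t)) B₀ μ := by
          refine Integrable.integrableOn ?_
          refine Integrable.mono' (integrable_const (C * K)) ?_ ?_
          · exact (x₀.continuous.comp_stronglyMeasurable hg).aestronglyMeasurable
          · filter_upwards [hug, hKbd] with t h1 h2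
            rw [Real.norm_eq_abs]
            calc |x₀ (g t)| = ‖x₀ (g t)‖ := rfl
              _ ≤ ‖x₀‖ * ‖g t‖ := x₀.le_opNorm _
              _ ≤ C * K := mul_le_mul hx₀norm (h1 ▸ h2) (norm_nonneg _) hC.le
        have h5 : (M - 3 * ε') * m₀ ≤ ∫ t in B₀, x₀ (g t) ∂μ := by
          have := setIntegral_ge_of_const_le hB₀meas hμB₀top hptwise hint2
          rw [hm₀def, mul_comm (M - 3 * ε'), ← smul_eq_mul, ← measureReal_def]; exact this
        have h6 : ∫ t in B₀, κ * x₀ (g t) ∂μ = κ * ∫ t in B₀, x₀ (g t) ∂μ :=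
          integral_const_mul κ _
        rw [h6]
        have h7 : κ * ((M - 3 * ε') * m₀) ≤ κ * ∫ t in B₀, x₀ (g t) ∂μ :=
          mul_le_mul_of_nonneg_left h5 hκpos.le
        have h8 : κ * ((M - 3 * ε') * m₀) = (M - 3 * ε') / (1 + ε') := by
          rw [hκdef]
          field_simp
        have h9 : M - ε ≤ (M - 3 * ε') / (1 + ε') := by
          rw [le_div_iff₀ (by linarith : (0:ℝ) < 1 + ε')]
          nlinarith [hM0, hε, hε', hε'eq]
        linarith
    refine le_antisymm ?_ (csSup_le ⟨0, h0mem⟩ hub)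
    by_contra hcon
    push_neg at hcon
    obtain ⟨r, hr, hr2⟩ := hstep ((M - sSup Sset)/2) (by linarith)
    have := le_csSup hbdd hr
    linarith
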